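/- Let n > 4 be even. Among all pairs (ε₁, m; ε₂, n−m) with m even, 2 ≤ m ≤ n−2, and signs ε_i ∈ {+, −}, the quantity E(ε₁, m) + E(ε₂, n−m) is maximized by the pair of negative cycles (−, 2) and (−, n−2), where E(+, k) = 2·cot(π/k) and E(−, k) = 2·csc(π/k). That is, for all even m with 2 ≤ m ≤ n−2 and all sign choices, E(ε₁, m) + E(ε₂, n−m) ≤ 2·csc(π/2) + 2·csc(π/(n−2)) = 2 + 2·csc(π/(n−2)). -/

import Mathlib

open Real

/-- Iota energy of a directed even cycle of length `k`: sign `true` is positive. -/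
noncomputable def iotaE (ε : Bool) (k : ℝ) : ℝ :=
  if ε then 2 * Real.cot (π / k) else 2 * (1 / Real.sin (π / k))

lemma csc_upper {θ : ℝ} (h0 : 0 < θ) (h1 : θ ≤ 4/5) :
    1 / Real.sin θ ≤ 1 / θ + 3/10 * θ := by
  have hcube : θ - θ^3/4 < Real.sin θ := by
    have := Real.sin_gt_sub_cube h0; nlinarith [pow_pos h0 3]
  have hsq : θ^2 ≤ 16/25 := by nlinarith
  have hcube3 : θ^3 * θ^2 ≤ θ^3 * (16/25) :=
    mul_le_mul_of_nonneg_left hsq (by positivity)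
  have hpos : 0 < θ - θ^3/4 := by nlinarith [mul_le_mul_of_nonneg_left hsq h0.le]
  have hs : 0 < Real.sin θ := lt_trans hpos hcube
  have step1 : 1 / Real.sin θ ≤ 1 / (θ - θ^3/4) :=
    one_div_le_one_div_of_le hpos hcube.le
  have step2 : 1 / (θ - θ^3/4) ≤ (10 + 3*θ^2) / (10*θ) := by
    rw [div_le_div_iff₀ hpos (by positivity)]
    nlinarith [hcube3, mul_pos (mul_pos h0 h0) h0]
  have heq : (10 + 3*θ^2) / (10*θ) = 1/θ + 3/10*θ := by
    field_simp
  linarith [heq ▸ step2]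

lemma csc_lower {x : ℝ} (hx : 1 < x) : x / π ≤ 1 / Real.sin (π / x) := by
  have hπ := Real.pi_pos
  have hx0 : 0 < x := by linarith
  have h0 : 0 < π / x := by positivity
  have hlt : π / x < π := div_lt_self hπ hx
  have hs : 0 < Real.sin (π / x) := Real.sin_pos_of_pos_of_lt_pi h0 hlt
  have hsinlt : Real.sin (π / x) < π / x := Real.sin_lt h0
  calc x / π = 1 / (π / x) := by rw [one_div_div]
    _ ≤ 1 / Real.sin (π / x) := one_div_le_one_div_of_le hs hsinlt.le

lemma iota_le (ε : Bool) (x : ℝ) (hx : 2 ≤ x) :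
    iotaE ε x ≤ 2 * (1 / Real.sin (π / x)) := by
  have hπ := Real.pi_pos
  have hx0 : 0 < x := by linarith
  have h0 : 0 < π / x := by positivity
  have hlt : π / x < π := div_lt_self hπ (by linarith)
  have hs : 0 < Real.sin (π / x) := Real.sin_pos_of_pos_of_lt_pi h0 hlt
  cases ε with
  | false => simp [iotaE]
  | true =>
    simp only [iotaE, if_true, Real.cot_eq_cos_div_sin]
    have : Real.cos (π / x) / Real.sin (π / x) ≤ 1 / Real.sin (π / x) := by
      gcongr
      exact Real.cos_le_one _
    linarith

lemma key (a b : ℝ) (ha : 4 ≤ a) (hb : 4 ≤ b) (hab : 8 * (a + b) ≤ 3 * (a * b)) :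
    2 * (1 / Real.sin (π / a)) + 2 * (1 / Real.sin (π / b)) ≤
      2 + 2 * (1 / Real.sin (π / (a + b - 2))) := by
  have hπ := Real.pi_pos
  have hπ315 := Real.pi_lt_d2
  have hπ314 := Real.pi_gt_d2
  have ha0 : 0 < a := by linarith
  have hb0 : 0 < b := by linarith
  -- upper bounds for the two cosecants
  have hθa : π / a ≤ 4/5 := by rw [div_le_iff₀ ha0]; nlinarith
  have hθb : π / b ≤ 4/5 := by rw [div_le_iff₀ hb0]; nlinarith
  have hua := csc_upper (by positivity) hθa
  have hub := csc_upper (by positivity) hθb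
  have hinva : 1 / (π / a) = a / π := one_div_div _ _
  have hinvb : 1 / (π / b) = b / π := one_div_div _ _
  rw [hinva] at hua
  rw [hinvb] at hub
  -- lower bound for the right-hand cosecant
  have hl := csc_lower (show (1:ℝ) < a + b - 2 by linarith)
  -- reduce to an arithmetic inequality
  have harith : 2 * (a / π + 3/10 * (π / a)) + 2 * (b / π + 3/10 * (π / b)) ≤
      2 + 2 * ((a + b - 2) / π) := by
    have h1 : π / a + π / b ≤ 3/8 * π := by
      rw [div_add_div _ _ (ne_of_gt ha0) (ne_of_gt hb0)]
      rw [div_le_iff₀ (by positivity)]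
      nlinarith
    have h4 : 4 / π ≤ 2 - (9/40) * π := by
      rw [div_le_iff₀ hπ]; nlinarith
    have he : 2 * ((a + b - 2) / π) = 2 * (a / π) + 2 * (b / π) - 4 / π := by
      ring
    have h5 : 3/10 * (π / a) + 3/10 * (π / b) ≤ (9/80) * π := by linarith
    linarith
  linarith

theorem stmt15 (n : ℤ) (hne : Even n) (hn : 4 < n)
    (m : ℤ) (hme : Even m) (h2 : 2 ≤ m) (hub : m ≤ n - 2) (ε₁ ε₂ : Bool) :
    iotaE ε₁ (m : ℝ) + iotaE ε₂ ((n : ℝ) - (m : ℝ)) ≤ 2 + 2 * (1 / Real.sin (π / ((n : ℝ) - 2))) := by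
  have hπ := Real.pi_pos
  have hπ315 := Real.pi_lt_d2
  obtain ⟨k, hk⟩ := hne
  obtain ⟨j, hj⟩ := hme
  have hm2 : (2:ℝ) ≤ (m:ℝ) := by exact_mod_cast h2
  have hnm2 : (2:ℝ) ≤ (n:ℝ) - (m:ℝ) := by
    have hmr : ((m:ℤ):ℝ) ≤ ((n - 2 : ℤ):ℝ) := by exact_mod_cast hub
    push_cast at hmr; linarith
  have hA := iota_le ε₁ (m:ℝ) hm2
  have hB := iota_le ε₂ ((n:ℝ) - (m:ℝ)) hnm2
  -- it suffices to bound the sum of cosecants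
  suffices h : 2 * (1 / Real.sin (π / (m:ℝ))) + 2 * (1 / Real.sin (π / ((n:ℝ) - (m:ℝ)))) ≤
      2 + 2 * (1 / Real.sin (π / ((n:ℝ) - 2))) by linarith
  by_cases hm2' : m = 2
  · subst hm2'
    have : Real.sin (π / (2:ℝ)) = 1 := by
      norm_num [Real.sin_pi_div_two]
    push_cast
    rw [this]
    norm_num
  by_cases hmn2 : m = n - 2
  · subst hmn2
    have hsub : (n:ℝ) - ((n:ℝ) - 2) = 2 := by ring
    have h1 : ((n - 2 : ℤ) : ℝ) = (n:ℝ) - 2 := by push_cast; ring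
    rw [h1, hsub, Real.sin_pi_div_two]
    norm_num
    linarith [Real.sin_pos_of_pos_of_lt_pi
      (show 0 < π / ((n:ℝ) - 2) by
        apply div_pos hπ; have : (6:ℤ) ≤ n := by omega
        have : (6:ℝ) ≤ (n:ℝ) := by exact_mod_cast this
        linarith)
      (div_lt_self hπ (by
        have : (6:ℤ) ≤ n := by omega
        have : (6:ℝ) ≤ (n:ℝ) := by exact_mod_cast this
        linarith))]
  -- now 4 ≤ m and m ≤ n - 4
  have hm4 : 4 ≤ m := by omega
  have hmn4 : m ≤ n - 4 := by omega
  have ha4 : (4:ℝ) ≤ (m:ℝ) := by exact_mod_cast hm4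
  have hb4 : (4:ℝ) ≤ (n:ℝ) - (m:ℝ) := by
    have : (m:ℝ) ≤ (n:ℝ) - 4 := by
      have : ((m:ℤ):ℝ) ≤ ((n - 4 : ℤ):ℝ) := by exact_mod_cast hmn4
      push_cast at this; linarith
    linarith
  by_cases hn8 : n = 8
  · -- m = 4, both cycles of length 4
    have hm : m = 4 := by omega
    subst hm; subst hn8
    have h4 : Real.sin (π / (4:ℝ)) = Real.sqrt 2 / 2 := Real.sin_pi_div_four
    have h6 : Real.sin (π / (6:ℝ)) = 1 / 2 := Real.sin_pi_div_six
    have hs2 : Real.sqrt 2 ^ 2 = 2 := Real.sq_sqrt (by norm_num)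
    have hs2n : 0 ≤ Real.sqrt 2 := Real.sqrt_nonneg 2
    have hs2pos : 0 < Real.sqrt 2 := by nlinarith
    push_cast
    norm_num [h4, h6]
    nlinarith [hs2, hs2n]
  by_cases hn10 : n = 10
  · -- m ∈ {4, 6}
    have hsum : 2 * (1 / Real.sin (π / (4:ℝ))) + 2 * (1 / Real.sin (π / (6:ℝ))) ≤
        2 + 2 * (1 / Real.sin (π / (8:ℝ))) := by
      have h4 : Real.sin (π / (4:ℝ)) = Real.sqrt 2 / 2 := Real.sin_pi_div_four
      have h6 : Real.sin (π / (6:ℝ)) = 1 / 2 := Real.sin_pi_div_six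
      have hs2 : Real.sqrt 2 ^ 2 = 2 := Real.sq_sqrt (by norm_num)
      have hs2n : 0 ≤ Real.sqrt 2 := Real.sqrt_nonneg 2
      have hs2pos : 0 < Real.sqrt 2 := by nlinarith
      have hs2ub : Real.sqrt 2 ≤ 1.45 := by nlinarith
      have hl := csc_lower (show (1:ℝ) < 8 by norm_num)
      have h8π : (2.53 : ℝ) ≤ 8 / π := by
        rw [le_div_iff₀ hπ]; nlinarith
      rw [h4, h6]
      have hcsc4 : 1 / (Real.sqrt 2 / 2) = 2 / Real.sqrt 2 := by
        rw [one_div_div]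
      have h2s : 2 / Real.sqrt 2 ≤ Real.sqrt 2 := by
        rw [div_le_iff₀ hs2pos]; nlinarith
      rw [hcsc4]
      have : (1:ℝ) / (1/2) = 2 := by norm_num
      rw [this]
      linarith
    have hm46 : m = 4 ∨ m = 6 := by omega
    subst hn10
    rcases hm46 with hm | hm <;> subst hm <;> push_cast <;> norm_num at hsum ⊢ <;> linarith
  -- general case: n ≥ 12
  have hn12 : 12 ≤ n := by omega
  have hn12R : (12:ℝ) ≤ (n:ℝ) := by exact_mod_cast hn12
  have hk := key (m:ℝ) ((n:ℝ) - (m:ℝ)) ha4 hb4 (by nlinarith)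
  have : (m:ℝ) + ((n:ℝ) - (m:ℝ)) - 2 = (n:ℝ) - 2 := by ring
  rw [this] at hk
  exact hk
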